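/- Let Λ ≤ PGL(d,ℝ) act irreducibly on ℝ^d, let T be a nonzero non-invertible endomorphism of ℝ^d arising as a limit of elements of Λ in P(End(ℝ^d)), and let g ∈ Λ be proximal with attracting line ℓ⁺_g. Then there exists φ ∈ Λ with φ·ℓ⁺_g ∉ [ker T], and consequently the conjugates g_n := h_n φ g (h_n φ)^{-1} (for any sequence h_n ∈ Λ converging to T in P(End(ℝ^d))) are proximal with ℓ⁺_{g_n} = h_n φ ℓ⁺_g converging to T(φ ℓ⁺_g). -/

import Mathlib

open Matrix Topology Filter
open scoped MatrixGroups

noncomputable section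

abbrev Vd (d : ℕ) := Fin d → ℝ
abbrev Md (d : ℕ) := Matrix (Fin d) (Fin d) ℝ

open scoped Classical in
/-- The multiset of absolute values of the complex eigenvalues (roots of the
characteristic polynomial over `ℂ`, with multiplicity) of a real `d × d` matrix. -/
def eigMods {d : ℕ} (g : Md d) : Multiset ℝ :=
  ((g.charpoly.map (algebraMap ℝ ℂ)).roots).map (fun z => ‖z‖)

open scoped Classical in
/-- `g` is proximal: the largest modulus of an eigenvalue is attained exactly once. -/
def IsProximal {d : ℕ} (g : Md d) : Prop :=
  ∃ r ∈ eigMods g, (eigMods g).count r = 1 ∧ ∀ s ∈ eigMods g, s ≤ r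

/-- `ℓ` is the attracting eigenline of `g`: the eigenspace of a real eigenvalue of
maximal modulus, of dimension one. -/
def IsTopEigenline {d : ℕ} (g : Md d) (ℓ : Submodule ℝ (Vd d)) : Prop :=
  ∃ μ : ℝ, (∀ s ∈ eigMods g, s ≤ |μ|) ∧
    ℓ = Module.End.eigenspace (Matrix.toLin' g) μ ∧ Module.finrank ℝ ℓ = 1

/-- `C` is the cone over a properly convex domain `Ω ⊂ P(ℝ^d)`: an open convex
cone, nonempty, whose closure contains no line (salient). -/
def IsProperCone {d : ℕ} (C : Set (Vd d)) : Prop :=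
  IsOpen C ∧ Convex ℝ C ∧ C.Nonempty ∧
    (∀ v ∈ C, ∀ t : ℝ, 0 < t → t • v ∈ C) ∧
    (∀ v ∈ closure C, -v ∈ closure C → v = 0)

/-- `g` induces an automorphism of the properly convex domain with cone `C`. -/
def ConeAut {d : ℕ} (C : Set (Vd d)) (g : Md d) : Prop :=
  IsUnit g ∧ (fun v => g.mulVec v) '' C = C

/-- Gauge `M(u/v) = inf{t > 0 : t v - u ∈ closure C}`. -/
def gaugeM {d : ℕ} (C : Set (Vd d)) (u v : Vd d) : ℝ :=
  sInf {t : ℝ | 0 < t ∧ t • v - u ∈ closure C}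

/-- The Hilbert distance between the projective points `[u]`, `[v]` of the properly
convex domain with cone `C` : `H([u],[v]) = (1/2) log (M(u/v) M(v/u))`. -/
def hilbertDist {d : ℕ} (C : Set (Vd d)) (u v : Vd d) : ℝ :=
  (1/2) * Real.log (gaugeM C u v * gaugeM C v u)

/-- The closed projective segment `[[u],[v]]` is contained in `∂Ω`. -/
def BSeg {d : ℕ} (C : Set (Vd d)) (u v : Vd d) : Prop :=
  ∀ s t : ℝ, 0 ≤ s → 0 ≤ t → s • u + t • v ∉ C

/-- `[v]` belongs to the open face `F_Ω([u])`: either `[v] = [u]`, or some open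
projective segment contained in `closure Ω` contains both `[u]` and `[v]`. -/
def InFace {d : ℕ} (C : Set (Vd d)) (u v : Vd d) : Prop :=
  v ∈ closure C ∧ ((∃ t : ℝ, 0 < t ∧ v = t • u) ∨
    ∃ ε : ℝ, 0 < ε ∧ u - ε • v ∈ closure C ∧ v - ε • u ∈ closure C)

/-- `[v]` is an extreme point of `closure Ω`: it is not in the interior of any
nondegenerate projective segment contained in `closure Ω`. -/
def IsExtremePt {d : ℕ} (C : Set (Vd d)) (v : Vd d) : Prop :=
  v ∈ closure C ∧ v ≠ 0 ∧ ∀ a ∈ closure C, ∀ b ∈ closure C,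
    ∀ s t : ℝ, 0 < s → 0 < t → v = s • a + t • b → ∃ c : ℝ, a = c • b


/-- The quotient topology on the projective space `P(V)`. -/
instance projTopology {K V : Type*} [DivisionRing K] [AddCommGroup V] [Module K V]
    [TopologicalSpace V] : TopologicalSpace (Projectivization K V) :=
  inferInstanceAs (TopologicalSpace (Quotient (projectivizationSetoid K V)))

/-- The set of projective points with a representative in `A`. -/
def projSet {d : ℕ} (A : Set (Vd d)) : Set (Projectivization ℝ (Vd d)) :=
  {x | ∃ (v : Vd d) (hv : v ≠ 0), v ∈ A ∧ x = Projectivization.mk ℝ v hv}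

/-- The action of `γ ∈ GL(d,ℝ)` on the projective space `P(ℝ^d)`. -/
def pAct {d : ℕ} (γ : GL (Fin d) ℝ) : Projectivization ℝ (Vd d) → Projectivization ℝ (Vd d) :=
  Projectivization.map (Matrix.toLin' (↑γ : Md d)) (by
    have : Function.LeftInverse (Matrix.toLin' (↑γ⁻¹ : Md d)) (Matrix.toLin' (↑γ : Md d)) := by
      intro v
      simp only [Matrix.toLin'_apply, Matrix.mulVec_mulVec]
      rw [Matrix.coe_units_inv, Matrix.nonsing_inv_mul _ ((Matrix.isUnit_iff_isUnit_det _).mp γ.isUnit), Matrix.one_mulVec]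
    exact this.injective)

/-- `T` lies in the closure of `Λ` in `P(End(ℝ^d))`. -/
def InEndClosure {d : ℕ} (Λ : Set (Md d)) (T : Md d) : Prop :=
  T ≠ 0 ∧ ∃ (g : ℕ → Md d) (c : ℕ → ℝ), (∀ n, g n ∈ Λ) ∧
    Tendsto (fun n => c n • g n) atTop (nhds T)



section Aux

variable {d : ℕ}

lemma mulVec_ne_zero_of_unit {A : Md d} (hA : IsUnit A) {w : Vd d} (hw : w ≠ 0) :
    A.mulVec w ≠ 0 := by
  intro h
  have hd : IsUnit A.det := (Matrix.isUnit_iff_isUnit_det A).mp hA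
  have : (A⁻¹ * A).mulVec w = 0 := by
    rw [← Matrix.mulVec_mulVec, h, Matrix.mulVec_zero]
  rw [Matrix.nonsing_inv_mul A hd, Matrix.one_mulVec] at this
  exact hw this

lemma charpoly_conj_unit (A g : Md d) (hA : IsUnit A) :
    (A * g * A⁻¹).charpoly = g.charpoly := by
  have hd : IsUnit A.det := (Matrix.isUnit_iff_isUnit_det A).mp hA
  have h1 : A * A⁻¹ = 1 := Matrix.mul_nonsing_inv A hd
  set f : Md d →+* Matrix (Fin d) (Fin d) (Polynomial ℝ) := (Polynomial.C : ℝ →+* Polynomial ℝ).mapMatrix with hf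
  have key : Matrix.charmatrix (A * g * A⁻¹) = f A * Matrix.charmatrix g * f A⁻¹ := by
    have hscalar : ∀ B : Md d, f B * Matrix.scalar (Fin d) (Polynomial.X) =
        Matrix.scalar (Fin d) (Polynomial.X) * f B := fun B =>
      (Matrix.scalar_commute Polynomial.X (fun r' => Commute.all _ _) (f B)).eq.symm
    rw [Matrix.charmatrix, Matrix.charmatrix, mul_sub, sub_mul, hscalar]
    rw [mul_assoc (Matrix.scalar (Fin d) Polynomial.X), ← f.map_mul, h1, f.map_one, mul_one]
    congr 1
    rw [← f.map_mul, ← f.map_mul]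
  rw [Matrix.charpoly, Matrix.charpoly, key, Matrix.det_mul, Matrix.det_mul]
  have hdet : (f A).det * (f A⁻¹).det = 1 := by
    rw [← Matrix.det_mul, ← f.map_mul, h1, f.map_one, Matrix.det_one]
  calc (f A).det * (Matrix.charmatrix g).det * (f A⁻¹).det
      = (f A).det * (f A⁻¹).det * (Matrix.charmatrix g).det := by ring
    _ = (Matrix.charmatrix g).det := by rw [hdet, one_mul]

lemma eigMods_conj_unit (A g : Md d) (hA : IsUnit A) :
    eigMods (A * g * A⁻¹) = eigMods g := by
  unfold eigMods
  rw [charpoly_conj_unit A g hA]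

lemma eigenspace_conj_unit (A g : Md d) (hA : IsUnit A) (μ : ℝ) :
    Module.End.eigenspace (Matrix.toLin' (A * g * A⁻¹)) μ =
      (Module.End.eigenspace (Matrix.toLin' g) μ).map (Matrix.toLin' A) := by
  have hd : IsUnit A.det := (Matrix.isUnit_iff_isUnit_det A).mp hA
  have h1 : A * A⁻¹ = 1 := Matrix.mul_nonsing_inv A hd
  have h2 : A⁻¹ * A = 1 := Matrix.nonsing_inv_mul A hd
  ext x
  simp only [Submodule.mem_map, Module.End.mem_eigenspace_iff, Matrix.toLin'_apply]
  constructor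
  · intro hx
    refine ⟨A⁻¹.mulVec x, ?_, ?_⟩
    · have h3 : g.mulVec (A⁻¹.mulVec x) = (A⁻¹ * (A * g * A⁻¹)).mulVec x := by
        rw [mul_assoc, ← mul_assoc A⁻¹ A, h2, one_mul, ← Matrix.mulVec_mulVec]
      rw [h3, ← Matrix.mulVec_mulVec, hx, Matrix.mulVec_smul]
    · rw [Matrix.mulVec_mulVec, h1, Matrix.one_mulVec]
  · rintro ⟨y, hy, rfl⟩
    rw [Matrix.mulVec_mulVec]
    have h4 : A * g * A⁻¹ * A = A * g := by rw [mul_assoc, h2, mul_one]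
    rw [h4, ← Matrix.mulVec_mulVec, hy, Matrix.mulVec_smul]

lemma map_span_singleton_toLin' (A : Md d) (w : Vd d) :
    (ℝ ∙ w).map (Matrix.toLin' A) = ℝ ∙ (A.mulVec w) := by
  rw [Submodule.map_span, Set.image_singleton, Matrix.toLin'_apply]

end Aux

/-- for an irreducible `Λ`, a singular limit `T` of `Λ` in
`P(End(ℝ^d))` and a proximal `g ∈ Λ` with eigenline `[v]`, there is `φ ∈ Λ` with
`φ·[v] ∉ [ker T]`; consequently, for any sequence `h n ∈ Λ` converging to `T`, the
conjugates `(h n · φ) g (h n · φ)⁻¹` are proximal with attracting lines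
`(h n · φ)·[v]` converging to `T(φ·[v])`. -/
theorem stmt10 {d : ℕ} (Λ : Set (Md d)) (hunit : ∀ g ∈ Λ, IsUnit g)
    (hmul : ∀ g ∈ Λ, ∀ h ∈ Λ, g * h ∈ Λ)
    (hirr : ∀ W : Submodule ℝ (Vd d), (∀ g ∈ Λ, W.map (Matrix.toLin' g) ≤ W) → W = ⊥ ∨ W = ⊤)
    (T : Md d) (hTcl : InEndClosure Λ T) (hTni : ¬ IsUnit T)
    (g : Md d) (hgΛ : g ∈ Λ) (hgprox : IsProximal g) (v : Vd d) (hv : v ≠ 0)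
    (hl : IsTopEigenline g (ℝ ∙ v)) :
    ∃ φ ∈ Λ, T.mulVec (φ.mulVec v) ≠ 0 ∧
      ∀ (hn : ℕ → Md d) (c : ℕ → ℝ), (∀ n, hn n ∈ Λ) →
        Tendsto (fun n => c n • hn n) atTop (nhds T) →
        (∀ n, IsProximal (hn n * φ * g * (hn n * φ)⁻¹) ∧
          IsTopEigenline (hn n * φ * g * (hn n * φ)⁻¹) (ℝ ∙ ((hn n * φ).mulVec v))) ∧
        ∃ c' : ℕ → ℝ, Tendsto (fun n => c' n • (hn n * φ).mulVec v) atTop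
          (nhds (T.mulVec (φ.mulVec v))) := by
  classical
  -- Step 1: find φ ∈ Λ with T (φ v) ≠ 0, using irreducibility.
  obtain ⟨hT0, hseq⟩ := hTcl
  have hgunit : IsUnit g := hunit g hgΛ
  set S : Set (Vd d) := {w | ∃ p ∈ Λ, w = p.mulVec v} with hS
  set W : Submodule ℝ (Vd d) := Submodule.span ℝ S with hW
  have hWinv : ∀ g' ∈ Λ, W.map (Matrix.toLin' g') ≤ W := by
    intro g' hg'
    rw [hW, Submodule.map_span]
    apply Submodule.span_le.2
    rintro _ ⟨w, ⟨p, hp, rfl⟩, rfl⟩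
    apply Submodule.subset_span
    exact ⟨g' * p, hmul g' hg' p hp, by rw [Matrix.toLin'_apply, Matrix.mulVec_mulVec]⟩
  have hWne : W ≠ ⊥ := by
    intro hbot
    have hmem : g.mulVec v ∈ W := Submodule.subset_span ⟨g, hgΛ, rfl⟩
    rw [hbot, Submodule.mem_bot] at hmem
    exact mulVec_ne_zero_of_unit hgunit hv hmem
  have hWtop : W = ⊤ := (hirr W hWinv).resolve_left hWne
  have hφ : ∃ φ ∈ Λ, T.mulVec (φ.mulVec v) ≠ 0 := by
    by_contra h
    push_neg at h
    have hker : W ≤ LinearMap.ker (Matrix.toLin' T) := by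
      rw [hW]
      apply Submodule.span_le.2
      rintro _ ⟨p, hp, rfl⟩
      simp only [SetLike.mem_coe, LinearMap.mem_ker, Matrix.toLin'_apply]
      exact h p hp
    have : Matrix.toLin' T = 0 := by
      apply LinearMap.ext
      intro x
      have : x ∈ LinearMap.ker (Matrix.toLin' T) := hker (hWtop ▸ Submodule.mem_top)
      simpa using this
    exact hT0 (Matrix.toLin'.injective (by simpa using this))
  obtain ⟨φ, hφΛ, hφne⟩ := hφ
  refine ⟨φ, hφΛ, hφne, ?_⟩
  intro hn c hhnΛ hconv
  constructor
  · -- proximality and top eigenlines of the conjugates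
    intro n
    set A : Md d := hn n * φ with hA
    have hAΛ : A ∈ Λ := hmul (hn n) (hhnΛ n) φ hφΛ
    have hAu : IsUnit A := hunit A hAΛ
    have heig : eigMods (A * g * A⁻¹) = eigMods g := eigMods_conj_unit A g hAu
    constructor
    · obtain ⟨r, hr, hcount, hmax⟩ := hgprox
      exact ⟨r, heig ▸ hr, by rw [heig]; exact hcount, by rw [heig]; exact hmax⟩
    · obtain ⟨μ, hμ, hsp, hfr⟩ := hl
      refine ⟨μ, by rw [heig]; exact hμ, ?_, ?_⟩
      · rw [eigenspace_conj_unit A g hAu μ, ← hsp, map_span_singleton_toLin']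
      · exact finrank_span_singleton (mulVec_ne_zero_of_unit hAu hv)
  · -- convergence of the attracting lines
    refine ⟨c, ?_⟩
    have hrw : (fun n => c n • (hn n * φ).mulVec v) =
        fun n => (c n • hn n).mulVec (φ.mulVec v) := by
      funext n
      rw [Matrix.smul_mulVec, ← Matrix.mulVec_mulVec]
    rw [hrw]
    have hcont : Continuous fun M : Md d => M.mulVec (φ.mulVec v) :=
      continuous_id.matrix_mulVec continuous_const
    exact (hcont.tendsto T).comp hconv


end
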